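/- Let 1 ≤ p ≤ n, let σ ∈ J_p(1,…,n+1) satisfy σ(p+1) = 1, let c be the (p+1)-cycle on {1,…,n+1} sending j to j+1 for 1 ≤ j ≤ p and p+1 to 1, and set τ̃ = c^{−1} ∘ σ (so τ̃(p+1) = p+1). Let τ be the permutation of {1,…,n} obtained from τ̃ by deleting the fixed point p+1 and relabeling {1,…,n+1}∖{p+1} order-preservingly to {1,…,n}. Let ε : {1,…,n+1} → ℤ/2 be a parity function with ε(p+1) = 1, let ε' : {1,…,n} → ℤ/2 be the corresponding restriction of ε under the relabeling, and set q = #{ 1 ≤ j ≤ p+1 : ε(j) = 1 }. Then (−1)^{(σ^{−1})ᵒ} computed with respect to ε equals (−1)^{q−1}·(−1)^{(τ^{−1})ᵒ} computed with respect to ε'. -/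
import Mathlib


open Finset

/-- `(-1)^{σᵒ}`: the signature of the induced permutation `σᵒ` of the odd indices
(with respect to the parity function `ε`), computed as `(-1)` to the number of
inversions of `σ` among positions carrying odd values. -/
def oddSign {n : ℕ} (σ : Equiv.Perm (Fin n)) (ε : Fin n → ZMod 2) : ℤ :=
  (-1 : ℤ) ^ (Finset.univ.filter fun q : Fin n × Fin n =>
      q.1 < q.2 ∧ ε (σ q.1) = 1 ∧ ε (σ q.2) = 1 ∧ σ q.2 < σ q.1).card

/-- The set `J_p(1,…,n)` of shuffles: permutations of `{1,…,n}` (here `Fin n`)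
increasing on the first `p` positions and on the remaining `n - p` positions. -/
def shuffles (n p : ℕ) : Finset (Equiv.Perm (Fin n)) :=
  Finset.univ.filter fun σ =>
    (∀ i j : Fin n, i < j → (j : ℕ) < p → σ i < σ j) ∧
    (∀ i j : Fin n, i < j → p ≤ (i : ℕ) → σ i < σ j)

private lemma oddSign_inv_eq {n : ℕ} (π : Equiv.Perm (Fin n)) (ε : Fin n → ZMod 2) :
    oddSign π⁻¹ ε = (-1 : ℤ) ^ (Finset.univ.filter fun q : Fin n × Fin n =>
      q.1 < q.2 ∧ ε q.1 = 1 ∧ ε q.2 = 1 ∧ π q.2 < π q.1).card := by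
  unfold oddSign
  congr 1
  refine Finset.card_bij (fun q _ => (π⁻¹ q.2, π⁻¹ q.1)) ?_ ?_ ?_
  · intro a ha
    simp only [Finset.mem_filter, Finset.mem_univ, true_and] at ha ⊢
    obtain ⟨h1, h2, h3, h4⟩ := ha
    exact ⟨h4, h3, h2, by simpa using h1⟩
  · intro a ha b hb h
    simp only [Prod.mk.injEq, EmbeddingLike.apply_eq_iff_eq] at h
    exact Prod.ext h.2 h.1
  · intro b hb
    simp only [Finset.mem_filter, Finset.mem_univ, true_and] at hb ⊢
    obtain ⟨h1, h2, h3, h4⟩ := hb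
    exact ⟨(π b.2, π b.1), ⟨h4, by simpa using h3, by simpa using h2, by simpa using h1⟩,
      by simp⟩

/-- Same setting as the previous statement, but now the deleted index is odd:
`1 ≤ p ≤ n`, `σ ∈ J_p(1,…,n+1)` with `σ(p+1) = 1`, `τ̃ = c⁻¹ ∘ σ` fixes `p+1`,
and `τ` is obtained by deleting the fixed point and relabelling.  Let `ε` be a
parity function with `ε(p+1) = 1`, `ε'` its restriction under the relabelling, and
`q = #{1 ≤ j ≤ p+1 : ε(j) = 1}`.  Then `(−1)^{(σ⁻¹)ᵒ}` computed w.r.t. `ε` equals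
`(−1)^{q−1}·(−1)^{(τ⁻¹)ᵒ}` computed w.r.t. `ε'`. -/
theorem oddSign_delete_fixed_point_odd (n p : ℕ) (hp : 1 ≤ p) (hpn : p ≤ n)
    (σ : Equiv.Perm (Fin (n + 1))) (hσ : σ ∈ shuffles (n + 1) p)
    (h1 : σ ⟨p, by omega⟩ = ⟨0, by omega⟩)
    (c : Equiv.Perm (Fin (n + 1)))
    (hc : ∀ k : Fin (n + 1), (c k : ℕ) =
      if (k : ℕ) < p then (k : ℕ) + 1 else if (k : ℕ) = p then 0 else (k : ℕ))
    (τ : Equiv.Perm (Fin n))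
    (hτ : ∀ j : Fin n,
      (c⁻¹ * σ) ((⟨p, by omega⟩ : Fin (n + 1)).succAbove j)
        = (⟨p, by omega⟩ : Fin (n + 1)).succAbove (τ j))
    (ε : Fin (n + 1) → ZMod 2) (hε : ε ⟨p, by omega⟩ = 1) :
    oddSign σ⁻¹ ε
      = (-1 : ℤ) ^
          ((Finset.univ.filter fun j : Fin (n + 1) => (j : ℕ) ≤ p ∧ ε j = 1).card - 1) *
        oddSign τ⁻¹ (fun j => ε ((⟨p, by omega⟩ : Fin (n + 1)).succAbove j)) := by
  set P : Fin (n + 1) := ⟨p, by omega⟩ with hPdef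
  rw [oddSign_inv_eq σ ε, oddSign_inv_eq τ _]
  -- basic facts
  have hσP : σ P = 0 := by
    rw [h1]; rfl
  -- c preserves order away from value p
  have hcmono : ∀ x y : Fin (n + 1), x ≠ P → y ≠ P → (c x < c y ↔ x < y) := by
    intro x y hx hy
    have hx' : (x : ℕ) ≠ p := fun h => hx (Fin.ext h)
    have hy' : (y : ℕ) ≠ p := fun h => hy (Fin.ext h)
    rw [Fin.lt_def, Fin.lt_def, hc x, hc y]
    split_ifs <;> omega
  have hστ : ∀ a : Fin n, σ (P.succAbove a) = c (P.succAbove (τ a)) := by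
    intro a
    have := hτ a
    simp only [Equiv.Perm.mul_apply] at this
    have := congrArg c this
    simpa using this
  have hcomp : ∀ a b : Fin n,
      σ (P.succAbove b) < σ (P.succAbove a) ↔ τ b < τ a := by
    intro a b
    rw [hστ, hστ, hcmono _ _ (Fin.succAbove_ne P _) (Fin.succAbove_ne P _),
      Fin.succAbove_lt_succAbove_iff]
  -- inversions sets
  set T : Finset (Fin (n + 1) × Fin (n + 1)) :=
    Finset.univ.filter fun q : Fin (n + 1) × Fin (n + 1) =>
      q.1 < q.2 ∧ ε q.1 = 1 ∧ ε q.2 = 1 ∧ σ q.2 < σ q.1 with hTdef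
  set B : Finset (Fin n × Fin n) :=
    Finset.univ.filter fun q : Fin n × Fin n =>
      q.1 < q.2 ∧ ε (P.succAbove q.1) = 1 ∧ ε (P.succAbove q.2) = 1 ∧ τ q.2 < τ q.1
    with hBdef
  set Q : Finset (Fin (n + 1)) :=
    Finset.univ.filter fun j : Fin (n + 1) => (j : ℕ) ≤ p ∧ ε j = 1 with hQdef
  -- split T
  have hsplit : (T.filter fun q => q.2 = P).card
      + (T.filter fun q => ¬ q.2 = P).card = T.card :=
    Finset.card_filter_add_card_filter_not _
  -- pairs ending at P
  have hcard1 : (T.filter fun q => q.2 = P).card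
      = (Finset.univ.filter fun i : Fin (n + 1) => i < P ∧ ε i = 1).card := by
    symm
    refine Finset.card_bij (fun i _ => (i, P)) ?_ ?_ ?_
    · intro i hi
      simp only [Finset.mem_filter, Finset.mem_univ, true_and] at hi
      refine Finset.mem_filter.2 ⟨Finset.mem_filter.2 ⟨Finset.mem_univ _, hi.1, hi.2, hε, ?_⟩, rfl⟩
      rw [hσP]
      exact Fin.pos_of_ne_zero fun h => (ne_of_lt hi.1) (σ.injective (h.trans hσP.symm))
    · intro a _ b _ h
      simpa using congrArg Prod.fst h
    · intro q hq
      simp only [Finset.mem_filter, Finset.mem_univ, true_and, hTdef] at hq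
      obtain ⟨⟨hlt, he1, _, _⟩, h2⟩ := hq
      exact ⟨q.1, Finset.mem_filter.2 ⟨Finset.mem_univ _, h2 ▸ hlt, he1⟩,
        Prod.ext rfl h2.symm⟩
  -- pairs avoiding P
  have hcard2 : (T.filter fun q => ¬ q.2 = P).card = B.card := by
    symm
    refine Finset.card_bij (fun q _ => (P.succAbove q.1, P.succAbove q.2)) ?_ ?_ ?_
    · intro a ha
      simp only [Finset.mem_filter, Finset.mem_univ, true_and, hBdef, hTdef] at ha ⊢
      obtain ⟨hlt, he1, he2, hinv⟩ := ha
      exact ⟨⟨Fin.succAbove_lt_succAbove_iff.2 hlt, he1, he2, (hcomp _ _).2 hinv⟩,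
        Fin.succAbove_ne P _⟩
    · intro a _ b _ h
      simp only [Prod.mk.injEq] at h
      exact Prod.ext (Fin.succAbove_right_injective h.1) (Fin.succAbove_right_injective h.2)
    · intro q hq
      simp only [Finset.mem_filter, Finset.mem_univ, true_and, hTdef] at hq
      obtain ⟨⟨hlt, he1, he2, hinv⟩, h2⟩ := hq
      have hq1 : q.1 ≠ P := by
        intro h
        rw [h, hσP] at hinv
        exact absurd hinv (Fin.not_lt.2 (Fin.zero_le _))
      obtain ⟨a, ha⟩ := Fin.exists_succAbove_eq hq1
      obtain ⟨b, hb⟩ := Fin.exists_succAbove_eq h2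
      refine ⟨(a, b), ?_, Prod.ext ha hb⟩
      simp only [Finset.mem_filter, Finset.mem_univ, true_and, hBdef]
      rw [← ha, ← hb] at hlt
      rw [← ha] at he1
      rw [← hb] at he2
      rw [← ha, ← hb] at hinv
      exact ⟨Fin.succAbove_lt_succAbove_iff.1 hlt, he1, he2, (hcomp _ _).1 hinv⟩
  -- Q.card
  have hQcard : Q.card
      = (Finset.univ.filter fun i : Fin (n + 1) => i < P ∧ ε i = 1).card + 1 := by
    have : Q = insert P (Finset.univ.filter fun i : Fin (n + 1) => i < P ∧ ε i = 1) := by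
      ext j
      simp only [hQdef, Finset.mem_filter, Finset.mem_univ, true_and, Finset.mem_insert,
        Fin.lt_def]
      constructor
      · rintro ⟨hle, he⟩
        rcases eq_or_lt_of_le hle with h | h
        · exact Or.inl (Fin.ext h)
        · exact Or.inr ⟨by simpa [P] using h, he⟩
      · rintro (rfl | ⟨hlt, he⟩)
        · exact ⟨le_refl _, hε⟩
        · exact ⟨by have hPv : (P : ℕ) = p := rfl; omega, he⟩
    rw [this, Finset.card_insert_of_notMem (by simp [Finset.mem_filter])]
  have hTcard : T.card
      = B.card + ((Finset.univ.filter fun i : Fin (n + 1) => i < P ∧ ε i = 1).card) := by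
    omega
  rw [hTcard, hQcard, Nat.add_sub_cancel, pow_add, mul_comm]
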